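/- Let r be odd and G' a leaf-expansion of the r-graph G at a leaf l of its spanning tree T, introducing the vertex set V(K) of a copy of K_r. If S ⊆ V(G) is an even-cardinality set with l ∈ S and |∂_G(S)| = 2, then S' = (S \ {l}) ∪ V(K) has even cardinality and |∂_{G'}(S')| = 2, and the 2-cut reduction of S in G yields the same graph as the 2-cut reduction of S' in G'. -/

import Mathlib

open Finset

structure Multigraph (V : Type) where
  mult : Sym2 V → ℕ
  loopless : ∀ v : V, mult s(v, v) = 0

namespace Multigraph

variable {V : Type} [Fintype V] [DecidableEq V]

def degree (G : Multigraph V) (v : V) : ℕ := ∑ u, G.mult s(v, u)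

def IsRegular (G : Multigraph V) (r : ℕ) : Prop := ∀ v, G.degree v = r

def cutsize (G : Multigraph V) (S : Finset V) : ℕ :=
  ∑ x ∈ S, ∑ y ∈ Sᶜ, G.mult s(x, y)

def IsRGraph (G : Multigraph V) (r : ℕ) : Prop :=
  G.IsRegular r ∧ ∀ S : Finset V, Odd S.card → r ≤ G.cutsize S

def reduce (G : Multigraph V) (S : Finset V) {u v : V} (huv : u ≠ v) :
    Multigraph {x : V // x ∉ S} where
  mult p := G.mult (p.map Subtype.val) + (if p.map Subtype.val = s(u, v) then 1 else 0)
  loopless a := by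
    simp only [Sym2.map_pair_eq, G.loopless]
    rw [if_neg (fun h => by
      rcases Sym2.eq_iff.mp h with ⟨rfl, rfl⟩ | ⟨rfl, rfl⟩ <;> exact huv rfl)]

def IsPerfectMatching (G : Multigraph V) (M : Sym2 V → ℕ) : Prop :=
  (∀ p, M p ≤ G.mult p) ∧ ∀ v, ∑ u, M s(v, u) = 1

def degIn (T : Sym2 V → ℕ) (v : V) : ℕ := ∑ u, T s(v, u)

def IsSpanningTree (G : Multigraph V) (T : Sym2 V → ℕ) : Prop :=
  (∀ p, T p ≤ G.mult p) ∧ (∑ p : Sym2 V, T p) + 1 = Fintype.card V ∧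
    ∀ u v : V, Relation.ReflTransGen (fun a b => T s(a, b) ≠ 0) u v

end Multigraph

open Multigraph


variable {V : Type} [Fintype V] [DecidableEq V]

/-- The leaf-expansion of `G` at a vertex `l`: delete `l`, add a copy of the
complete graph `K_r` on new vertices `Sum.inr 0, …, Sum.inr (r-1)`, and join the
`i`-th new vertex to the former neighbour `φ i` of `l` (the function `φ`
enumerates the edge-ends at `l`, with multiplicity). -/
def Multigraph.leafExpand (G : Multigraph V) (r : ℕ) (l : V) (φ : Fin r → V)
    (hφ : ∀ i, φ i ≠ l) : Multigraph ({x : V // x ≠ l} ⊕ Fin r) where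
  mult := Sym2.lift ⟨fun a b =>
    match a, b with
    | Sum.inl a, Sum.inl b => G.mult s(a.1, b.1)
    | Sum.inl a, Sum.inr i => if φ i = a.1 then 1 else 0
    | Sum.inr i, Sum.inl a => if φ i = a.1 then 1 else 0
    | Sum.inr i, Sum.inr j => if i = j then 0 else 1,
    by
      intro a b
      rcases a with a | i <;> rcases b with b | j <;> simp only []
      · rw [Sym2.eq_swap]
      · simp [eq_comm]⟩
  loopless w := by
    rcases w with a | i <;> simp [G.loopless]

/-- Leaf-expansion commutes with 2-cut reduction.  Let `r` be odd and let `G'` be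
the leaf-expansion of the `r`-graph `G` at a leaf `l` of its spanning tree `T`,
introducing the vertex set of a copy of `K_r`.  If `S ⊆ V(G)` is an even set with
`l ∈ S` and `|∂_G(S)| = 2` (with outside endpoints `u ≠ v`), then
`S' = (S \ {l}) ∪ V(K)` is even, `|∂_{G'}(S')| = 2`, and the 2-cut reduction of
`S` in `G` yields the same graph as the 2-cut reduction of `S'` in `G'`. -/
theorem leaf_expansion_two_cut_commute {V : Type} [Fintype V] [DecidableEq V]
    (r : ℕ) (hodd : Odd r) (G : Multigraph V) (hG : G.IsRGraph r)
    (T : Sym2 V → ℕ) (hT : G.IsSpanningTree T) (l : V) (hleaf : degIn T l = 1)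
    (φ : Fin r → V) (hφ : ∀ x : V, (Finset.univ.filter fun i => φ i = x).card = G.mult s(l, x))
    (hφl : ∀ i, φ i ≠ l)
    (S : Finset V) (hSeven : Even S.card) (hlS : l ∈ S) (hcut : G.cutsize S = 2)
    (u v : V) (huv : u ≠ v) (hu : u ∉ S) (hv : v ∉ S)
    (hu1 : (∑ y ∈ S, G.mult s(u, y)) = 1) (hv1 : (∑ y ∈ S, G.mult s(v, y)) = 1)
    (hother : ∀ x : V, x ∉ S → x ≠ u → x ≠ v → ∀ y ∈ S, G.mult s(x, y) = 0) :
    letI S' : Finset ({x : V // x ≠ l} ⊕ Fin r) :=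
      ((S.erase l).subtype (· ≠ l)).disjSum Finset.univ
    Even S'.card ∧ (G.leafExpand r l φ hφl).cutsize S' = 2 ∧
      ∃ e : {w : {x : V // x ≠ l} ⊕ Fin r // w ∉ S'} ≃ {x : V // x ∉ S},
        ∀ p, ((G.leafExpand r l φ hφl).reduce S'
            (u := Sum.inl ⟨u, fun h => hu (h ▸ hlS)⟩)
            (v := Sum.inl ⟨v, fun h => hv (h ▸ hlS)⟩)
            (by simp [huv])).mult p =
          (G.reduce S huv).mult (p.map e) := by
  classical
  have hScard : 1 ≤ S.card := Finset.card_pos.mpr ⟨l, hlS⟩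
  refine ⟨?_, ?_, ?_⟩
  · -- Even cardinality
    rw [Finset.card_disjSum, Finset.card_subtype,
      Finset.filter_true_of_mem (fun x hx => (Finset.mem_erase.mp hx).1),
      Finset.card_erase_of_mem hlS, Finset.card_univ, Fintype.card_fin]
    exact (Nat.Even.sub_odd hScard hSeven odd_one).add_odd hodd
  · -- cutsize = 2
    have hcompl : ((((S.erase l).subtype (· ≠ l)).disjSum
        (Finset.univ : Finset (Fin r)))ᶜ : Finset _) =
        (((S.erase l).subtype (· ≠ l))ᶜ).disjSum ∅ := by
      ext w
      rcases w with a | i <;> simp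
    have hAc : (((S.erase l).subtype (· ≠ l))ᶜ : Finset {x : V // x ≠ l}) =
        Sᶜ.subtype (· ≠ l) := by
      ext ⟨x, hx⟩
      simp [Finset.mem_erase, hx]
    have key : ∀ f : V → ℕ, (∑ b ∈ (((S.erase l).subtype (· ≠ l))ᶜ :
        Finset {x : V // x ≠ l}), f b.1) = ∑ y ∈ Sᶜ, f y := by
      intro f
      rw [hAc, Finset.sum_subtype_eq_sum_filter f, Finset.filter_true_of_mem]
      intro y hy h
      exact (Finset.mem_compl.mp hy) (h ▸ hlS)
    show Multigraph.cutsize _ _ = 2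
    rw [Multigraph.cutsize, hcompl]
    rw [Finset.sum_disjSum]
    have inner : ∀ w : {x : V // x ≠ l} ⊕ Fin r,
        (∑ y ∈ ((((S.erase l).subtype (· ≠ l))ᶜ).disjSum (∅ : Finset (Fin r))),
          (G.leafExpand r l φ hφl).mult s(w, y)) =
        ∑ b ∈ (((S.erase l).subtype (· ≠ l))ᶜ : Finset {x : V // x ≠ l}),
          (G.leafExpand r l φ hφl).mult s(w, Sum.inl b) := by
      intro w; rw [Finset.sum_disjSum]; simp
    simp only [inner]
    have m1 : ∀ (a b : {x : V // x ≠ l}),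
        (G.leafExpand r l φ hφl).mult s(Sum.inl a, Sum.inl b) = G.mult s(a.1, b.1) := by
      intro a b; simp [Multigraph.leafExpand]
    have m2 : ∀ (i : Fin r) (b : {x : V // x ≠ l}),
        (G.leafExpand r l φ hφl).mult s(Sum.inr i, Sum.inl b) =
          if φ i = b.1 then 1 else 0 := by
      intro i b; simp [Multigraph.leafExpand]
    simp only [m1, m2]
    have t1 : (∑ a ∈ (S.erase l).subtype (· ≠ l),
        ∑ b ∈ (((S.erase l).subtype (· ≠ l))ᶜ : Finset {x : V // x ≠ l}),
          G.mult s(a.1, b.1)) = ∑ x ∈ S.erase l, ∑ y ∈ Sᶜ, G.mult s(x, y) := by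
      rw [Finset.sum_subtype_eq_sum_filter
          (fun x => ∑ b ∈ (((S.erase l).subtype (· ≠ l))ᶜ :
            Finset {x : V // x ≠ l}), G.mult s(x, b.1)),
        Finset.filter_true_of_mem (fun x hx => (Finset.mem_erase.mp hx).1)]
      exact Finset.sum_congr rfl fun x _ => key (fun y => G.mult s(x, y))
    have t2 : (∑ i : Fin r,
        ∑ b ∈ (((S.erase l).subtype (· ≠ l))ᶜ : Finset {x : V // x ≠ l}),
          if φ i = b.1 then 1 else 0) = ∑ y ∈ Sᶜ, G.mult s(l, y) := by
      have : ∀ i : Fin r, (∑ b ∈ (((S.erase l).subtype (· ≠ l))ᶜ :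
          Finset {x : V // x ≠ l}), if φ i = b.1 then 1 else 0) =
          ∑ y ∈ Sᶜ, if φ i = y then 1 else 0 :=
        fun i => key (fun y => if φ i = y then 1 else 0)
      simp only [this]
      rw [Finset.sum_comm]
      refine Finset.sum_congr rfl fun y _ => ?_
      rw [← hφ y, Finset.card_filter]
    rw [t1, t2, Finset.sum_erase_add S (fun x => ∑ y ∈ Sᶜ, G.mult s(x, y)) hlS]
    exact hcut
  · -- the reduced graphs agree
    have hg : ∀ x : {x : V // x ∉ S},
        (Sum.inl ⟨x.1, fun h => x.2 (h ▸ hlS)⟩ : {x : V // x ≠ l} ⊕ Fin r) ∉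
          ((S.erase l).subtype (· ≠ l)).disjSum (Finset.univ : Finset (Fin r)) := by
      rintro ⟨x, hx⟩ h
      rw [Finset.inl_mem_disjSum, Finset.mem_subtype, Finset.mem_erase] at h
      exact hx h.2
    refine ⟨⟨fun w => ⟨Sum.elim Subtype.val (fun _ => u) w.1, ?_⟩,
      fun x => ⟨Sum.inl ⟨x.1, fun h => x.2 (h ▸ hlS)⟩, hg x⟩, ?_, ?_⟩, ?_⟩
    · obtain ⟨w, hw⟩ := w
      rcases w with ⟨x, hxl⟩ | i
      · intro hxS
        exact hw (Finset.inl_mem_disjSum.mpr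
          (Finset.mem_subtype.mpr (Finset.mem_erase.mpr ⟨hxl, hxS⟩)))
      · exact absurd (Finset.inr_mem_disjSum.mpr (Finset.mem_univ i)) hw
    · rintro ⟨⟨x, hxl⟩ | i, hw⟩
      · rfl
      · exact absurd (Finset.inr_mem_disjSum.mpr (Finset.mem_univ i)) hw
    · rintro ⟨x, hx⟩
      rfl
    · intro p
      induction p using Sym2.ind with
      | _ w₁ w₂ =>
        rcases w₁ with ⟨⟨x, hxl⟩ | i, h₁⟩
        · rcases w₂ with ⟨⟨y, hyl⟩ | j, h₂⟩
          · simp only [Multigraph.reduce, Sym2.map_pair_eq, Equiv.coe_fn_mk,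
              Sum.elim_inl, Multigraph.leafExpand, Sym2.lift_mk]
            congr 1
            simp [Sym2.eq_iff, Subtype.ext_iff]
          · exact absurd (Finset.inr_mem_disjSum.mpr (Finset.mem_univ j)) h₂
        · exact absurd (Finset.inr_mem_disjSum.mpr (Finset.mem_univ i)) h₁
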